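/- Every nondegenerate line segment contained in the attractor K of the main example is parallel to the x-axis. -/

import Mathlib

open Set Complex

/-- `K` is the attractor (invariant nonempty compact set) of the system `S`. -/
def IsAttractor {X : Type*} [MetricSpace X] {m : ℕ} (S : Fin m → X → X) (K : Set X) : Prop :=
  K.Nonempty ∧ IsCompact K ∧ K = ⋃ i, S i '' K

/-- The five similarities of the main example, in the plane `ℝ² ≃ ℂ`:
`S₂ x = x/2 + (2,0)`, `S_k x = x/4 + a_k` for `a₁=(0,0)`, `a₃=(3,0)`,
`a₄=(1,√3)`, `a₅=(3/2, 3√3/2)`. -/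
noncomputable def mainS : Fin 5 → ℂ → ℂ :=
  ![fun w => w / 4,
    fun w => w / 2 + 2,
    fun w => w / 4 + 3,
    fun w => w / 4 + (1 + Real.sqrt 3 * Complex.I),
    fun w => w / 4 + (3 / 2 + (3 * Real.sqrt 3 / 2) * Complex.I)]

/-- The closed triangle with vertices `A=(0,0)`, `B=(2,2√3)`, `C=(4,0)`. -/
noncomputable def tri : Set ℂ :=
  convexHull ℝ {0, 2 + 2 * Real.sqrt 3 * Complex.I, 4}

open Metric

lemma sq3_pos : 0 < Real.sqrt 3 := Real.sqrt_pos.2 (by norm_num)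
lemma sq3_sq : Real.sqrt 3 ^ 2 = 3 := Real.sq_sqrt (by norm_num)

def PA (z : ℂ) : Prop :=
  0 ≤ z.im ∧ z.im ≤ Real.sqrt 3 * z.re ∧ z.im ≤ Real.sqrt 3 * (1 - z.re)
def PB (z : ℂ) : Prop :=
  0 ≤ z.im ∧ z.im ≤ Real.sqrt 3 * (z.re - 2) ∧ z.im ≤ Real.sqrt 3 * (4 - z.re)
def PC4 (z : ℂ) : Prop :=
  Real.sqrt 3 ≤ z.im ∧ z.im ≤ Real.sqrt 3 * z.re ∧ z.im ≤ Real.sqrt 3 * (3 - z.re)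
def PC5 (z : ℂ) : Prop :=
  3 * Real.sqrt 3 / 2 ≤ z.im ∧ z.im ≤ Real.sqrt 3 * z.re ∧ z.im ≤ Real.sqrt 3 * (4 - z.re)

noncomputable def jpt : ℂ := 3 / 2 + (3 * Real.sqrt 3 / 2) * Complex.I

lemma jpt_re : jpt.re = 3 / 2 := by simp [jpt]
lemma jpt_im : jpt.im = 3 * Real.sqrt 3 / 2 := by simp [jpt]

lemma closed_PA : IsClosed {z : ℂ | PA z} := by
  unfold PA
  refine IsClosed.inter (isClosed_le continuous_const Complex.continuous_im) ?_
  exact IsClosed.inter (isClosed_le Complex.continuous_im (by fun_prop))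
    (isClosed_le Complex.continuous_im (by fun_prop))

lemma closed_PB : IsClosed {z : ℂ | PB z} := by
  unfold PB
  refine IsClosed.inter (isClosed_le continuous_const Complex.continuous_im) ?_
  exact IsClosed.inter (isClosed_le Complex.continuous_im (by fun_prop))
    (isClosed_le Complex.continuous_im (by fun_prop))

lemma closed_PC4 : IsClosed {z : ℂ | PC4 z} := by
  unfold PC4
  refine IsClosed.inter (isClosed_le continuous_const Complex.continuous_im) ?_
  exact IsClosed.inter (isClosed_le Complex.continuous_im (by fun_prop))
    (isClosed_le Complex.continuous_im (by fun_prop))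

lemma closed_PC5 : IsClosed {z : ℂ | PC5 z} := by
  unfold PC5
  refine IsClosed.inter (isClosed_le continuous_const Complex.continuous_im) ?_
  exact IsClosed.inter (isClosed_le Complex.continuous_im (by fun_prop))
    (isClosed_le Complex.continuous_im (by fun_prop))

lemma PA_PB (z : ℂ) : PA z → PB z → False := by
  rintro ⟨h1, h2, h3⟩ ⟨h4, h5, h6⟩; nlinarith [sq3_pos]

lemma PA_PC4 (z : ℂ) : PA z → PC4 z → False := by
  rintro ⟨h1, h2, h3⟩ ⟨h4, h5, h6⟩; nlinarith [sq3_pos]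

lemma PA_PC5 (z : ℂ) : PA z → PC5 z → False := by
  rintro ⟨h1, h2, h3⟩ ⟨h4, h5, h6⟩; nlinarith [sq3_pos]

lemma PB_PC4 (z : ℂ) : PB z → PC4 z → False := by
  rintro ⟨h1, h2, h3⟩ ⟨h4, h5, h6⟩; nlinarith [sq3_pos]

lemma PB_PC5 (z : ℂ) : PB z → PC5 z → False := by
  rintro ⟨h1, h2, h3⟩ ⟨h4, h5, h6⟩; nlinarith [sq3_pos]

lemma PC4_PC5 (z : ℂ) : PC4 z → PC5 z → z = jpt := by
  rintro ⟨h1, h2, h3⟩ ⟨h4, h5, h6⟩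
  have hre : z.re = 3 / 2 := by nlinarith [sq3_pos]
  have him : z.im = 3 * Real.sqrt 3 / 2 := by nlinarith [sq3_pos]
  exact Complex.ext (by rw [hre, jpt_re]) (by rw [him, jpt_im])

lemma PC4_jpt : PC4 jpt := by
  refine ⟨?_, ?_, ?_⟩ <;> simp only [jpt_im, jpt_re] <;> nlinarith [sq3_pos]

lemma PC5_jpt : PC5 jpt := by
  refine ⟨?_, ?_, ?_⟩ <;> simp only [jpt_im, jpt_re] <;> nlinarith [sq3_pos]

lemma dist_quarter (a b c : ℂ) : dist (a/4 + c) (b/4 + c) = dist a b / 4 := by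
  simp only [Complex.dist_eq]
  rw [show a/4 + c - (b/4 + c) = (a - b)/4 by ring, norm_div]
  simp

lemma dist_half (a b c : ℂ) : dist (a/2 + c) (b/2 + c) = dist a b / 2 := by
  simp only [Complex.dist_eq]
  rw [show a/2 + c - (b/2 + c) = (a - b)/2 by ring, norm_div]
  simp

lemma re4 (w : ℂ) : (w/4).re = w.re/4 := by simp [Complex.div_re]
lemma im4 (w : ℂ) : (w/4).im = w.im/4 := by simp [Complex.div_im]
lemma re2 (w : ℂ) : (w/2).re = w.re/2 := by simp [Complex.div_re]
lemma im2 (w : ℂ) : (w/2).im = w.im/2 := by simp [Complex.div_im]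

section
variable {K : Set ℂ}

lemma mem_cases (hK : IsAttractor mainS K) {z : ℂ} (hz : z ∈ K) :
    (∃ y ∈ K, z = y / 4) ∨ (∃ y ∈ K, z = y / 2 + 2) ∨ (∃ y ∈ K, z = y / 4 + 3) ∨
    (∃ y ∈ K, z = y / 4 + (1 + Real.sqrt 3 * Complex.I)) ∨
    (∃ y ∈ K, z = y / 4 + (3 / 2 + (3 * Real.sqrt 3 / 2) * Complex.I)) := by
  have h := hK.2.2.subset hz
  simp only [Set.mem_iUnion, Set.mem_image] at h
  obtain ⟨i, y, hy, hyz⟩ := h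
  fin_cases i
  · exact Or.inl ⟨y, hy, hyz.symm⟩
  · exact Or.inr (Or.inl ⟨y, hy, hyz.symm⟩)
  · exact Or.inr (Or.inr (Or.inl ⟨y, hy, hyz.symm⟩))
  · exact Or.inr (Or.inr (Or.inr (Or.inl ⟨y, hy, hyz.symm⟩)))
  · exact Or.inr (Or.inr (Or.inr (Or.inr ⟨y, hy, hyz.symm⟩)))

lemma piece_sub (hK : IsAttractor mainS K) (i : Fin 5) : mainS i '' K ⊆ K := by
  conv_rhs => rw [hK.2.2]
  exact Set.subset_iUnion (fun i => mainS i '' K) i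

lemma mem_of_S1 (hK : IsAttractor mainS K) {y : ℂ} (hy : y ∈ K) : y / 4 ∈ K :=
  piece_sub hK 0 ⟨y, hy, rfl⟩

lemma mem_of_S2 (hK : IsAttractor mainS K) {y : ℂ} (hy : y ∈ K) : y / 2 + 2 ∈ K :=
  piece_sub hK 1 ⟨y, hy, rfl⟩

lemma mem_of_S4 (hK : IsAttractor mainS K) {y : ℂ} (hy : y ∈ K) :
    y / 4 + (1 + Real.sqrt 3 * Complex.I) ∈ K :=
  piece_sub hK 3 ⟨y, hy, rfl⟩

lemma mem_of_S5 (hK : IsAttractor mainS K) {y : ℂ} (hy : y ∈ K) :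
    y / 4 + (3 / 2 + (3 * Real.sqrt 3 / 2) * Complex.I) ∈ K :=
  piece_sub hK 4 ⟨y, hy, rfl⟩

/-- fixed points of contractions mapping K into itself belong to K -/
lemma fix_mem (hK : IsAttractor mainS K) (f : ℂ → ℂ) (hf : ∀ y ∈ K, f y ∈ K) (v : ℂ)
    (hv : ∀ y : ℂ, dist v (f y) ≤ dist v y / 2) : v ∈ K := by
  have hne := hK.1
  have hcl : IsClosed K := hK.2.1.isClosed
  have hd0 : 0 ≤ infDist v K := infDist_nonneg
  have h2 : 2 * infDist v K ≤ infDist v K := by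
    by_contra h
    push_neg at h
    obtain ⟨y, hy, hdy⟩ := (infDist_lt_iff hne).1 h
    have h3 : infDist v K ≤ dist v (f y) := infDist_le_dist_of_mem (hf y hy)
    have := hv y
    linarith
  exact (hcl.mem_iff_infDist_zero hne).2 (by linarith)

lemma zero_mem (hK : IsAttractor mainS K) : (0 : ℂ) ∈ K := by
  refine fix_mem hK (fun y => y / 4) (fun y hy => mem_of_S1 hK hy) 0 (fun y => ?_)
  have h := dist_quarter 0 y 0
  simp only [add_zero, zero_div] at h
  rw [h]
  have := dist_nonneg (x := (0:ℂ)) (y := y)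
  linarith

lemma topv_mem (hK : IsAttractor mainS K) : (2 + 2 * Real.sqrt 3 * Complex.I : ℂ) ∈ K := by
  set v : ℂ := 2 + 2 * Real.sqrt 3 * Complex.I with hv
  refine fix_mem hK (fun y => y / 4 + (3 / 2 + (3 * Real.sqrt 3 / 2) * Complex.I))
    (fun y hy => mem_of_S5 hK hy) v (fun y => ?_)
  have hfix : v = v / 4 + (3 / 2 + (3 * Real.sqrt 3 / 2) * Complex.I) := by
    apply Complex.ext <;> simp [hv, re4, im4] <;> ring
  calc dist v (y / 4 + (3 / 2 + (3 * Real.sqrt 3 / 2) * Complex.I))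
      = dist (v / 4 + (3 / 2 + (3 * Real.sqrt 3 / 2) * Complex.I))
          (y / 4 + (3 / 2 + (3 * Real.sqrt 3 / 2) * Complex.I)) := by rw [← hfix]
    _ = dist v y / 4 := dist_quarter v y _
    _ ≤ dist v y / 2 := by have := dist_nonneg (x := v) (y := y); linarith

lemma jpt_mem4 (hK : IsAttractor mainS K) :
    ∃ y ∈ K, jpt = y / 4 + (1 + Real.sqrt 3 * Complex.I) := by
  refine ⟨2 + 2 * Real.sqrt 3 * Complex.I, topv_mem hK, ?_⟩
  apply Complex.ext <;> simp [jpt, re4, im4] <;> ring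

lemma jpt_mem5 (hK : IsAttractor mainS K) :
    ∃ y ∈ K, jpt = y / 4 + (3 / 2 + (3 * Real.sqrt 3 / 2) * Complex.I) := by
  refine ⟨0, zero_mem hK, ?_⟩
  apply Complex.ext <;> simp [jpt]

/-- K is contained in the big triangle region W -/
lemma K_sub_W (hK : IsAttractor mainS K) {z : ℂ} (hz : z ∈ K) :
    0 ≤ z.im ∧ z.im ≤ Real.sqrt 3 * z.re ∧ z.im ≤ Real.sqrt 3 * (4 - z.re) := by
  set W : Set ℂ :=
    {w : ℂ | 0 ≤ w.im ∧ w.im ≤ Real.sqrt 3 * w.re ∧ w.im ≤ Real.sqrt 3 * (4 - w.re)} with hW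
  have hWne : W.Nonempty := ⟨0, by simp [hW]⟩
  have hWcl : IsClosed W := by
    refine IsClosed.inter (isClosed_le continuous_const Complex.continuous_im) ?_
    exact IsClosed.inter (isClosed_le Complex.continuous_im (by fun_prop))
      (isClosed_le Complex.continuous_im (by fun_prop))
  have hinv : ∀ i : Fin 5, ∀ w ∈ W, mainS i w ∈ W := by
    intro i w hw
    obtain ⟨h1, h2, h3⟩ := hw
    fin_cases i
    · show (w / 4 : ℂ) ∈ W
      refine ⟨?_, ?_, ?_⟩ <;> simp only [re4, im4] <;> nlinarith [sq3_pos]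
    · show (w / 2 + 2 : ℂ) ∈ W
      refine ⟨?_, ?_, ?_⟩ <;>
        simp only [Complex.add_re, Complex.add_im, re2, im2] <;> norm_num <;>
        nlinarith [sq3_pos]
    · show (w / 4 + 3 : ℂ) ∈ W
      refine ⟨?_, ?_, ?_⟩ <;>
        simp only [Complex.add_re, Complex.add_im, re4, im4] <;> norm_num <;>
        nlinarith [sq3_pos]
    · show (w / 4 + (1 + Real.sqrt 3 * Complex.I) : ℂ) ∈ W
      refine ⟨?_, ?_, ?_⟩ <;>
        simp only [Complex.add_re, Complex.add_im, re4, im4, Complex.one_re, Complex.one_im,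
          Complex.mul_re, Complex.mul_im, Complex.I_re, Complex.I_im, Complex.ofReal_re,
          Complex.ofReal_im] <;> norm_num <;> nlinarith [sq3_pos]
    · show (w / 4 + (3 / 2 + (3 * Real.sqrt 3 / 2) * Complex.I) : ℂ) ∈ W
      refine ⟨?_, ?_, ?_⟩ <;>
        simp only [Complex.add_re, Complex.add_im, re4, im4, re2, im2, Complex.mul_re,
          Complex.mul_im, Complex.I_re, Complex.I_im, Complex.ofReal_re, Complex.ofReal_im,
          Complex.div_ofNat_re, Complex.div_ofNat_im] <;>
        norm_num <;> nlinarith [sq3_pos]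
  have hlip : ∀ i : Fin 5, ∀ y w : ℂ, dist (mainS i y) (mainS i w) ≤ dist y w / 2 := by
    intro i y w
    have hd := dist_nonneg (x := y) (y := w)
    fin_cases i
    · show dist (y / 4) (w / 4) ≤ dist y w / 2
      have h := dist_quarter y w 0
      simp only [add_zero] at h
      rw [h]; linarith
    · show dist (y / 2 + 2) (w / 2 + 2) ≤ dist y w / 2
      rw [dist_half y w 2]
    · show dist (y / 4 + 3) (w / 4 + 3) ≤ dist y w / 2
      rw [dist_quarter y w 3]; linarith
    · show dist (y / 4 + (1 + Real.sqrt 3 * Complex.I))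
          (w / 4 + (1 + Real.sqrt 3 * Complex.I)) ≤ dist y w / 2
      rw [dist_quarter y w _]; linarith
    · show dist (y / 4 + (3 / 2 + (3 * Real.sqrt 3 / 2) * Complex.I))
          (w / 4 + (3 / 2 + (3 * Real.sqrt 3 / 2) * Complex.I)) ≤ dist y w / 2
      rw [dist_quarter y w _]; linarith
  have key : ∀ i : Fin 5, ∀ y : ℂ, infDist (mainS i y) W ≤ infDist y W / 2 := by
    intro i y
    by_contra h
    push_neg at h
    obtain ⟨w, hw, hdw⟩ := (infDist_lt_iff hWne).1
      (show infDist y W < 2 * infDist (mainS i y) W by linarith)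
    have h1 : infDist (mainS i y) W ≤ dist (mainS i y) (mainS i w) :=
      infDist_le_dist_of_mem (hinv i w hw)
    have h2 := hlip i y w
    linarith
  obtain ⟨x0, hx0K, hx0max⟩ := hK.2.1.exists_isMaxOn hK.1
    ((continuous_infDist_pt W).continuousOn)
  have hx0 : infDist x0 W ≤ infDist x0 W / 2 := by
    have h := hK.2.2.subset hx0K
    simp only [Set.mem_iUnion, Set.mem_image] at h
    obtain ⟨i, y, hy, hyz⟩ := h
    have hmax : infDist y W ≤ infDist x0 W := hx0max hy
    calc infDist x0 W = infDist (mainS i y) W := by rw [hyz]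
      _ ≤ infDist y W / 2 := key i y
      _ ≤ infDist x0 W / 2 := by linarith
  have hx00 : infDist x0 W = 0 := le_antisymm (by linarith) infDist_nonneg
  have hmaxz : infDist z W ≤ infDist x0 W := hx0max hz
  have hz0 : infDist z W = 0 := le_antisymm (by linarith) infDist_nonneg
  exact (hWcl.mem_iff_infDist_zero hWne).2 hz0

end
section
variable {K : Set ℂ}

/-- main covering lemma: each point of K lies in one of the four labelled pieces. -/
lemma cover (hK : IsAttractor mainS K) {z : ℂ} (hz : z ∈ K) :
    ((∃ y ∈ K, z = y / 4) ∧ PA z) ∨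
    ((∃ y ∈ K, z = y / 2 + 2) ∧ PB z) ∨
    ((∃ y ∈ K, z = y / 4 + (1 + Real.sqrt 3 * Complex.I)) ∧ PC4 z) ∨
    ((∃ y ∈ K, z = y / 4 + (3 / 2 + (3 * Real.sqrt 3 / 2) * Complex.I)) ∧ PC5 z) := by
  rcases mem_cases hK hz with ⟨y, hy, rfl⟩ | ⟨y, hy, rfl⟩ | ⟨y, hy, rfl⟩ | ⟨y, hy, rfl⟩ |
    ⟨y, hy, rfl⟩
  · obtain ⟨h1, h2, h3⟩ := K_sub_W hK hy
    refine Or.inl ⟨⟨y, hy, rfl⟩, ?_, ?_, ?_⟩ <;> simp only [re4, im4] <;> nlinarith [sq3_pos]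
  · obtain ⟨h1, h2, h3⟩ := K_sub_W hK hy
    refine Or.inr (Or.inl ⟨⟨y, hy, rfl⟩, ?_, ?_, ?_⟩) <;>
      simp only [Complex.add_re, Complex.add_im, re2, im2] <;> norm_num <;> nlinarith [sq3_pos]
  · -- S3 case folds into the PB branch
    obtain ⟨h1, h2, h3⟩ := K_sub_W hK hy
    have hKy : y / 2 + 2 ∈ K := mem_of_S2 hK hy
    refine Or.inr (Or.inl ⟨⟨y / 2 + 2, hKy, by ring⟩, ?_, ?_, ?_⟩) <;>
      simp only [Complex.add_re, Complex.add_im, re4, im4] <;> norm_num <;> nlinarith [sq3_pos]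
  · obtain ⟨h1, h2, h3⟩ := K_sub_W hK hy
    refine Or.inr (Or.inr (Or.inl ⟨⟨y, hy, rfl⟩, ?_, ?_, ?_⟩)) <;>
      simp only [Complex.add_re, Complex.add_im, re4, im4, Complex.one_re, Complex.one_im,
        Complex.mul_re, Complex.mul_im, Complex.I_re, Complex.I_im, Complex.ofReal_re,
        Complex.ofReal_im] <;> norm_num <;> nlinarith [sq3_pos]
  · obtain ⟨h1, h2, h3⟩ := K_sub_W hK hy
    refine Or.inr (Or.inr (Or.inr ⟨⟨y, hy, rfl⟩, ?_, ?_, ?_⟩)) <;>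
      simp only [Complex.add_re, Complex.add_im, re4, im4, re2, im2, Complex.mul_re,
        Complex.mul_im, Complex.I_re, Complex.I_im, Complex.ofReal_re, Complex.ofReal_im,
        Complex.div_ofNat_re, Complex.div_ofNat_im] <;>
      norm_num <;> nlinarith [sq3_pos]


end
section
variable {K : Set ℂ}

/-- pulling back a segment by z ↦ 4 (z - c) -/
lemma pull4 {p q : ℂ} (c : ℂ) (h : ∀ z ∈ segment ℝ p q, 4 * (z - c) ∈ K) :
    segment ℝ (4 * (p - c)) (4 * (q - c)) ⊆ K := by
  intro w hw
  obtain ⟨a, b, ha, hb, hab, hw⟩ := hw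
  have hz : a • p + b • q ∈ segment ℝ p q := ⟨a, b, ha, hb, hab, rfl⟩
  have hmem := h _ hz
  have hab' : (a : ℂ) + b = 1 := by exact_mod_cast congrArg (fun x : ℝ => (x : ℂ)) hab
  have heq : 4 * ((a • p + b • q) - c) = w := by
    rw [← hw]
    simp only [Complex.real_smul]
    linear_combination (4 : ℂ) * c * hab'
  rwa [heq] at hmem

lemma pull2 {p q : ℂ} (h : ∀ z ∈ segment ℝ p q, 2 * (z - 2) ∈ K) :
    segment ℝ (2 * (p - 2)) (2 * (q - 2)) ⊆ K := by
  intro w hw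
  obtain ⟨a, b, ha, hb, hab, hw⟩ := hw
  have hz : a • p + b • q ∈ segment ℝ p q := ⟨a, b, ha, hb, hab, rfl⟩
  have hmem := h _ hz
  have hab' : (a : ℂ) + b = 1 := by exact_mod_cast congrArg (fun x : ℝ => (x : ℂ)) hab
  have heq : 2 * ((a • p + b • q) - 2) = w := by
    rw [← hw]
    simp only [Complex.real_smul]
    linear_combination (4 : ℂ) * hab'
  rwa [heq] at hmem

end
lemma seg_coords {p q z : ℂ} (hz : z ∈ segment ℝ p q) :
    ∃ a b : ℝ, 0 ≤ a ∧ 0 ≤ b ∧ a + b = 1 ∧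
      z.re = a * p.re + b * q.re ∧ z.im = a * p.im + b * q.im := by
  obtain ⟨a, b, ha, hb, hab, hw⟩ := hz
  exact ⟨a, b, ha, hb, hab, by rw [← hw]; simp, by rw [← hw]; simp⟩

lemma seg_pt {p q : ℂ} {t : ℝ} (h0 : 0 ≤ t) (h1 : t ≤ 1) :
    (1 - t) • p + t • q ∈ segment ℝ p q :=
  ⟨1 - t, t, by linarith, h0, by ring, rfl⟩

lemma mul4_re (w c : ℂ) : (4 * (w - c)).re = 4 * (w.re - c.re) := by simp
lemma mul4_im (w c : ℂ) : (4 * (w - c)).im = 4 * (w.im - c.im) := by simp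
lemma mul2_re (w : ℂ) : (2 * (w - 2)).re = 2 * (w.re - 2) := by simp
lemma mul2_im (w : ℂ) : (2 * (w - 2)).im = 2 * w.im := by simp

section
variable {K : Set ℂ}

/-- a point of K on the line y = √3 x comes from pieces 1, 4 or 5, staying on the line -/
lemma lineE (hK : IsAttractor mainS K) {z : ℂ} (hz : z ∈ K)
    (hl : z.im = Real.sqrt 3 * z.re) :
    (∃ y ∈ K, y.im = Real.sqrt 3 * y.re ∧ z = y / 4) ∨
    (∃ y ∈ K, y.im = Real.sqrt 3 * y.re ∧ z = y / 4 + (1 + Real.sqrt 3 * Complex.I)) ∨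
    (∃ y ∈ K, y.im = Real.sqrt 3 * y.re ∧
      z = y / 4 + (3 / 2 + (3 * Real.sqrt 3 / 2) * Complex.I)) := by
  rcases cover hK hz with ⟨⟨y, hy, hzy⟩, hP⟩ | ⟨⟨y, hy, hzy⟩, hP⟩ | ⟨⟨y, hy, hzy⟩, hP⟩ |
    ⟨⟨y, hy, hzy⟩, hP⟩
  · refine Or.inl ⟨y, hy, ?_, hzy⟩
    have h1 : z.re = y.re / 4 := by rw [hzy, re4]
    have h2 : z.im = y.im / 4 := by rw [hzy, im4]
    linear_combination 4 * hl - 4 * h2 + 4 * Real.sqrt 3 * h1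
  · exfalso
    obtain ⟨h1, h2, h3⟩ := hP
    nlinarith [sq3_pos, hl]
  · refine Or.inr (Or.inl ⟨y, hy, ?_, hzy⟩)
    have h1 : z.re = y.re / 4 + 1 := by
      rw [hzy]; simp [re4]
    have h2 : z.im = y.im / 4 + Real.sqrt 3 := by
      rw [hzy]; simp [im4]
    linear_combination 4 * hl - 4 * h2 + 4 * Real.sqrt 3 * h1
  · refine Or.inr (Or.inr ⟨y, hy, ?_, hzy⟩)
    have h1 : z.re = y.re / 4 + 3 / 2 := by
      rw [hzy]; simp [re4, Complex.div_ofNat_re]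
    have h2 : z.im = y.im / 4 + 3 * Real.sqrt 3 / 2 := by
      rw [hzy]; simp [im4, Complex.div_ofNat_im]
      try ring
    linear_combination 4 * hl - 4 * h2 + 4 * Real.sqrt 3 * h1

/-- points of K on the line have re in [0,2] -/
lemma lineRange (hK : IsAttractor mainS K) {z : ℂ} (hz : z ∈ K)
    (hl : z.im = Real.sqrt 3 * z.re) : 0 ≤ z.re ∧ z.re ≤ 2 := by
  set E : Set ℂ := K ∩ {w : ℂ | w.im = Real.sqrt 3 * w.re} with hE
  have hEcl : IsClosed {w : ℂ | w.im = Real.sqrt 3 * w.re} :=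
    isClosed_eq Complex.continuous_im (by fun_prop)
  have hEcpt : IsCompact E := hK.2.1.inter_right hEcl
  have hEne : E.Nonempty := ⟨z, hz, hl⟩
  have hstep : ∀ w ∈ E, ∃ y ∈ E, ∃ c : ℝ, (c = 0 ∨ c = 1 ∨ c = 3/2) ∧ w.re = y.re / 4 + c := by
    rintro w ⟨hwK, hwl⟩
    rcases lineE hK hwK hwl with ⟨y, hy, hyl, hw⟩ | ⟨y, hy, hyl, hw⟩ | ⟨y, hy, hyl, hw⟩
    · exact ⟨y, ⟨hy, hyl⟩, 0, Or.inl rfl, by rw [hw, re4]; ring⟩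
    · exact ⟨y, ⟨hy, hyl⟩, 1, Or.inr (Or.inl rfl), by rw [hw]; simp [re4]⟩
    · exact ⟨y, ⟨hy, hyl⟩, 3/2, Or.inr (Or.inr rfl), by
        rw [hw]; simp [re4, Complex.div_ofNat_re]⟩
  constructor
  · obtain ⟨x0, hx0E, hx0min⟩ := hEcpt.exists_isMinOn hEne Complex.continuous_re.continuousOn
    obtain ⟨y, hyE, c, hc, hre⟩ := hstep x0 hx0E
    have h1 : x0.re ≤ y.re := hx0min hyE
    have h2 : x0.re ≤ z.re := hx0min (show z ∈ E from ⟨hz, hl⟩)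
    rcases hc with rfl | rfl | rfl <;> linarith
  · obtain ⟨x0, hx0E, hx0max⟩ := hEcpt.exists_isMaxOn hEne Complex.continuous_re.continuousOn
    obtain ⟨y, hyE, c, hc, hre⟩ := hstep x0 hx0E
    have h1 : y.re ≤ x0.re := hx0max hyE
    have h2 : z.re ≤ x0.re := hx0max (show z ∈ E from ⟨hz, hl⟩)
    rcases hc with rfl | rfl | rfl <;> linarith

end
lemma seg_line {p q z : ℂ} (hp : p.im = Real.sqrt 3 * p.re) (hq : q.im = Real.sqrt 3 * q.re)
    (hz : z ∈ segment ℝ p q) : z.im = Real.sqrt 3 * z.re := by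
  obtain ⟨a, b, ha, hb, hab, hre, him⟩ := seg_coords hz
  rw [hre, him]
  linear_combination a * hp + b * hq

lemma seg_re_between {p q z : ℂ} (hle : p.re ≤ q.re) (hz : z ∈ segment ℝ p q) :
    p.re ≤ z.re ∧ z.re ≤ q.re := by
  obtain ⟨a, b, ha, hb, hab, hre, _⟩ := seg_coords hz
  have e1 : a * p.re + b * p.re = p.re := by linear_combination p.re * hab
  have e2 : a * q.re + b * q.re = q.re := by linear_combination q.re * hab
  have m1 : b * p.re ≤ b * q.re := mul_le_mul_of_nonneg_left hle hb
  have m2 : a * p.re ≤ a * q.re := mul_le_mul_of_nonneg_left hle ha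
  constructor
  · rw [hre]; linarith
  · rw [hre]; linarith

lemma seg_re_surj {p q : ℂ} (hlt : p.re < q.re) {x : ℝ} (h1 : p.re ≤ x) (h2 : x ≤ q.re) :
    ∃ z ∈ segment ℝ p q, z.re = x := by
  set t : ℝ := (x - p.re) / (q.re - p.re) with ht
  have hden : 0 < q.re - p.re := by linarith
  have ht0 : 0 ≤ t := div_nonneg (by linarith) (by linarith)
  have ht1 : t ≤ 1 := by rw [ht, div_le_one hden]; linarith
  refine ⟨(1 - t) • p + t • q, seg_pt ht0 ht1, ?_⟩
  have : ((1 - t) • p + t • q).re = (1 - t) * p.re + t * q.re := by simp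
  rw [this, ht]
  field_simp
  ring

lemma line_re_eq {z w : ℂ} (hz : z.im = Real.sqrt 3 * z.re) (hw : w.im = Real.sqrt 3 * w.re)
    (h : z.re = w.re) : z = w :=
  Complex.ext h (by rw [hz, hw, h])

lemma jpt_line : jpt.im = Real.sqrt 3 * jpt.re := by rw [jpt_im, jpt_re]; ring

section
variable {K : Set ℂ}

lemma line_pull1 (hK : IsAttractor mainS K) {p q : ℂ}
    (hp : p.im = Real.sqrt 3 * p.re) (hq : q.im = Real.sqrt 3 * q.re)
    (hle : p.re ≤ q.re) (hb : q.re ≤ 1/2) (hsub : segment ℝ p q ⊆ K) :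
    ∃ p' q' : ℂ, p'.im = Real.sqrt 3 * p'.re ∧ q'.im = Real.sqrt 3 * q'.re ∧
      segment ℝ p' q' ⊆ K ∧ q'.re - p'.re = 4 * (q.re - p.re) := by
  have hall : ∀ z ∈ segment ℝ p q, 4 * (z - 0) ∈ K := by
    intro z hz
    have hzK := hsub hz
    have hzl := seg_line hp hq hz
    have hzb := (seg_re_between hle hz).2
    rcases lineE hK hzK hzl with ⟨y, hy, hyl, hzy⟩ | ⟨y, hy, hyl, hzy⟩ | ⟨y, hy, hyl, hzy⟩
    · have : 4 * (z - 0) = y := by rw [hzy]; ring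
      rwa [this]
    · exfalso
      have hy0 := (lineRange hK hy hyl).1
      have : z.re = y.re / 4 + 1 := by rw [hzy]; simp [re4]
      linarith
    · exfalso
      have hy0 := (lineRange hK hy hyl).1
      have : z.re = y.re / 4 + 3/2 := by rw [hzy]; simp [re4, Complex.div_ofNat_re]
      linarith
  refine ⟨4 * (p - 0), 4 * (q - 0), ?_, ?_, pull4 0 hall, ?_⟩
  · rw [mul4_im, mul4_re]; simp; linarith
  · rw [mul4_im, mul4_re]; simp; linarith
  · rw [mul4_re, mul4_re]; simp; ring

lemma line_pull4mid (hK : IsAttractor mainS K) {p q : ℂ}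
    (hp : p.im = Real.sqrt 3 * p.re) (hq : q.im = Real.sqrt 3 * q.re)
    (hle : p.re ≤ q.re) (ha : 1 ≤ p.re) (hb : q.re ≤ 3/2) (hsub : segment ℝ p q ⊆ K) :
    ∃ p' q' : ℂ, p'.im = Real.sqrt 3 * p'.re ∧ q'.im = Real.sqrt 3 * q'.re ∧
      segment ℝ p' q' ⊆ K ∧ q'.re - p'.re = 4 * (q.re - p.re) := by
  set c : ℂ := 1 + Real.sqrt 3 * Complex.I with hc
  have hcre : c.re = 1 := by simp [hc]
  have hcim : c.im = Real.sqrt 3 := by simp [hc]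
  have hall : ∀ z ∈ segment ℝ p q, 4 * (z - c) ∈ K := by
    intro z hz
    have hzK := hsub hz
    have hzl := seg_line hp hq hz
    have hzb := seg_re_between hle hz
    rcases lineE hK hzK hzl with ⟨y, hy, hyl, hzy⟩ | ⟨y, hy, hyl, hzy⟩ | ⟨y, hy, hyl, hzy⟩
    · exfalso
      have hy2 := (lineRange hK hy hyl).2
      have : z.re = y.re / 4 := by rw [hzy, re4]
      linarith [hzb.1]
    · have : 4 * (z - c) = y := by rw [hzy, hc]; ring
      rwa [this]
    · -- z must be the junction point jpt
      have hy0 := (lineRange hK hy hyl).1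
      have hzre : z.re = y.re / 4 + 3/2 := by rw [hzy]; simp [re4, Complex.div_ofNat_re]
      have hz32 : z.re = 3/2 := by linarith [hzb.2]
      have hzj : z = jpt := line_re_eq hzl jpt_line (by rw [hz32, jpt_re])
      have : 4 * (z - c) = 2 + 2 * Real.sqrt 3 * Complex.I := by
        rw [hzj, jpt, hc]; ring
      rw [this]
      exact topv_mem hK
  refine ⟨4 * (p - c), 4 * (q - c), ?_, ?_, pull4 c hall, ?_⟩
  · rw [mul4_im, mul4_re, hcre, hcim]; linear_combination 4 * hp
  · rw [mul4_im, mul4_re, hcre, hcim]; linear_combination 4 * hq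
  · rw [mul4_re, mul4_re]; ring

lemma line_pull5mid (hK : IsAttractor mainS K) {p q : ℂ}
    (hp : p.im = Real.sqrt 3 * p.re) (hq : q.im = Real.sqrt 3 * q.re)
    (hle : p.re ≤ q.re) (ha : 3/2 ≤ p.re) (hsub : segment ℝ p q ⊆ K) :
    ∃ p' q' : ℂ, p'.im = Real.sqrt 3 * p'.re ∧ q'.im = Real.sqrt 3 * q'.re ∧
      segment ℝ p' q' ⊆ K ∧ q'.re - p'.re = 4 * (q.re - p.re) := by
  have hjre : jpt.re = 3/2 := jpt_re
  have hjim : jpt.im = 3 * Real.sqrt 3 / 2 := jpt_im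
  have hall : ∀ z ∈ segment ℝ p q, 4 * (z - jpt) ∈ K := by
    intro z hz
    have hzK := hsub hz
    have hzl := seg_line hp hq hz
    have hzb := seg_re_between hle hz
    rcases lineE hK hzK hzl with ⟨y, hy, hyl, hzy⟩ | ⟨y, hy, hyl, hzy⟩ | ⟨y, hy, hyl, hzy⟩
    · exfalso
      have hy2 := (lineRange hK hy hyl).2
      have : z.re = y.re / 4 := by rw [hzy, re4]
      linarith [hzb.1]
    · -- z must be the junction point jpt
      have hy2 := (lineRange hK hy hyl).2
      have hzre : z.re = y.re / 4 + 1 := by rw [hzy]; simp [re4]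
      have hz32 : z.re = 3/2 := by linarith [hzb.1]
      have hzj : z = jpt := line_re_eq hzl jpt_line (by rw [hz32, jpt_re])
      have : 4 * (z - jpt) = 0 := by rw [hzj]; ring
      rw [this]
      exact zero_mem hK
    · have : 4 * (z - jpt) = y := by rw [hzy, jpt]; ring
      rwa [this]
  refine ⟨4 * (p - jpt), 4 * (q - jpt), ?_, ?_, pull4 jpt hall, ?_⟩
  · rw [mul4_im, mul4_re, hjre, hjim]; linear_combination 4 * hp
  · rw [mul4_im, mul4_re, hjre, hjim]; linear_combination 4 * hq
  · rw [mul4_re, mul4_re]; ring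

/-- doubling lemma for segments on the line y = √3 x -/
lemma line_double (hK : IsAttractor mainS K) {p q : ℂ}
    (hp : p.im = Real.sqrt 3 * p.re) (hq : q.im = Real.sqrt 3 * q.re)
    (hlt : p.re < q.re) (hsub : segment ℝ p q ⊆ K) :
    ∃ p' q' : ℂ, p'.im = Real.sqrt 3 * p'.re ∧ q'.im = Real.sqrt 3 * q'.re ∧
      segment ℝ p' q' ⊆ K ∧ 2 * (q.re - p.re) ≤ q'.re - p'.re := by
  have hle := le_of_lt hlt
  by_cases hb : q.re ≤ 1/2
  · obtain ⟨p', q', h1, h2, h3, h4⟩ := line_pull1 hK hp hq hle hb hsub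
    exact ⟨p', q', h1, h2, h3, by linarith⟩
  push_neg at hb
  -- the gap (1/2, 1) forces 1 ≤ p.re
  have hga : 1 ≤ p.re := by
    by_contra hpa
    push_neg at hpa
    set x : ℝ := (max p.re (1/2) + min q.re 1) / 2 with hx
    have hx1 : p.re ≤ x := by
      have h1 : p.re ≤ max p.re (1/2) := le_max_left _ _
      have h2 : p.re ≤ min q.re 1 := le_min hle (by linarith)
      rw [hx]; linarith
    have hx2 : x ≤ q.re := by
      have h1 : max p.re (1/2) ≤ q.re := max_le hle (by linarith)
      have h2 : min q.re 1 ≤ q.re := min_le_left _ _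
      rw [hx]; linarith
    have hxlo : 1/2 < x := by
      have h1 : 1/2 ≤ max p.re (1/2) := le_max_right _ _
      have h2 : 1/2 < min q.re 1 := lt_min hb (by norm_num)
      rw [hx]; linarith
    have hxhi : x < 1 := by
      have h1 : max p.re (1/2) < 1 := max_lt hpa (by norm_num)
      have h2 : min q.re 1 ≤ 1 := min_le_right _ _
      rw [hx]; linarith
    obtain ⟨z, hzseg, hzre⟩ := seg_re_surj hlt hx1 hx2
    have hzK := hsub hzseg
    have hzl := seg_line hp hq hzseg
    rcases lineE hK hzK hzl with ⟨y, hy, hyl, hzy⟩ | ⟨y, hy, hyl, hzy⟩ | ⟨y, hy, hyl, hzy⟩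
    · have hy2 := (lineRange hK hy hyl).2
      have : z.re = y.re / 4 := by rw [hzy, re4]
      linarith
    · have hy0 := (lineRange hK hy hyl).1
      have : z.re = y.re / 4 + 1 := by rw [hzy]; simp [re4]
      linarith
    · have hy0 := (lineRange hK hy hyl).1
      have : z.re = y.re / 4 + 3/2 := by rw [hzy]; simp [re4, Complex.div_ofNat_re]
      linarith
  by_cases hb3 : q.re ≤ 3/2
  · obtain ⟨p', q', h1, h2, h3, h4⟩ := line_pull4mid hK hp hq hle hga hb3 hsub
    exact ⟨p', q', h1, h2, h3, by linarith⟩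
  push_neg at hb3
  by_cases ha3 : 3/2 ≤ p.re
  · obtain ⟨p', q', h1, h2, h3, h4⟩ := line_pull5mid hK hp hq hle ha3 hsub
    exact ⟨p', q', h1, h2, h3, by linarith⟩
  push_neg at ha3
  -- p.re < 3/2 < q.re : the junction point jpt lies on the segment
  obtain ⟨z, hzseg, hzre⟩ := seg_re_surj hlt (by linarith) (by linarith : (3/2:ℝ) ≤ q.re)
  have hzj : z = jpt := line_re_eq (seg_line hp hq hzseg) jpt_line (by rw [hzre, jpt_re])
  rw [hzj] at hzseg
  by_cases hmid : p.re + q.re ≤ 3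
  · -- use the left half [p, jpt]
    have hsub' : segment ℝ p jpt ⊆ K :=
      fun w hw => hsub ((convex_segment p q).segment_subset (left_mem_segment ℝ p q) hzseg hw)
    obtain ⟨p', q', h1, h2, h3, h4⟩ := line_pull4mid hK hp jpt_line
      (by rw [jpt_re]; linarith) hga (by rw [jpt_re]) hsub'
    refine ⟨p', q', h1, h2, h3, ?_⟩
    rw [jpt_re] at h4; linarith
  · push_neg at hmid
    have hsub' : segment ℝ jpt q ⊆ K :=
      fun w hw => hsub ((convex_segment p q).segment_subset hzseg (right_mem_segment ℝ p q) hw)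
    obtain ⟨p', q', h1, h2, h3, h4⟩ := line_pull5mid hK jpt_line hq
      (by rw [jpt_re]; linarith) (by rw [jpt_re]) hsub'
    refine ⟨p', q', h1, h2, h3, ?_⟩
    rw [jpt_re] at h4; linarith

/-- no nondegenerate segment of K lies on the line y = √3 x -/
lemma line_no_seg (hK : IsAttractor mainS K) {p q : ℂ}
    (hp : p.im = Real.sqrt 3 * p.re) (hq : q.im = Real.sqrt 3 * q.re)
    (hlt : p.re < q.re) (hsub : segment ℝ p q ⊆ K) : False := by
  set d : ℝ := q.re - p.re with hd
  have hd0 : 0 < d := by rw [hd]; linarith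
  have grow : ∀ n : ℕ, ∃ p' q' : ℂ, p'.im = Real.sqrt 3 * p'.re ∧
      q'.im = Real.sqrt 3 * q'.re ∧ p'.re < q'.re ∧ segment ℝ p' q' ⊆ K ∧
      2 ^ n * d ≤ q'.re - p'.re := by
    intro n
    induction n with
    | zero => exact ⟨p, q, hp, hq, hlt, hsub, by rw [hd]; norm_num⟩
    | succ m ih =>
      obtain ⟨a, b, h1, h2, h3, h4, h5⟩ := ih
      obtain ⟨a', b', g1, g2, g4, g5⟩ := line_double hK h1 h2 h3 h4
      have hpow : (0:ℝ) < 2 ^ m * d := by positivity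
      refine ⟨a', b', g1, g2, by nlinarith, g4, by
        rw [pow_succ]; nlinarith⟩
  obtain ⟨n, hn⟩ := pow_unbounded_of_one_lt (2 / d) (one_lt_two (α := ℝ))
  obtain ⟨a, b, h1, h2, h3, h4, h5⟩ := grow n
  have haK : a ∈ K := h4 (left_mem_segment ℝ a b)
  have hbK : b ∈ K := h4 (right_mem_segment ℝ a b)
  have ha2 := (lineRange hK haK h1).1
  have hb2 := (lineRange hK hbK h2).2
  have : 2 < 2 ^ n * d := by
    rw [div_lt_iff₀ hd0] at hn
    linarith
  linarith

end
open Set in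
/-- Abstract affine "cone" lemma on the unit interval. -/
lemma affine_cone {U0 dU G0 dG t4 t5 : ℝ}
    (h4 : t4 ∈ Icc (0:ℝ) 1) (h5 : t5 ∈ Icc (0:ℝ) 1)
    (hG : ∀ t ∈ Icc (0:ℝ) 1, 0 ≤ G0 + t * dG)
    (hUG : ∀ t ∈ Icc (0:ℝ) 1, U0 + t * dU < 0 → G0 + t * dG ≤ -2 * (U0 + t * dU))
    (hU4 : U0 + t4 * dU < 0) (hU5 : 0 ≤ U0 + t5 * dU)
    (hne5 : ¬(U0 + t5 * dU = 0 ∧ G0 + t5 * dG = 0)) :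
    dG = 0 ∧ G0 = 0 := by
  have hdU : dU ≠ 0 := by
    intro h
    rw [h] at hU4 hU5
    simp at hU4 hU5
    linarith
  set ts : ℝ := -U0 / dU with hts
  have hUs : U0 + ts * dU = 0 := by rw [hts]; field_simp; ring
  have key : ∀ t : ℝ, (t - ts) * dU = U0 + t * dU := fun t => by linear_combination -hUs
  have hU4' : (t4 - ts) * dU < 0 := by rw [key]; exact hU4
  have hU5' : 0 ≤ (t5 - ts) * dU := by rw [key]; exact hU5
  have hts_mem : ts ∈ Icc (0:ℝ) 1 := by
    rcases lt_or_gt_of_ne hdU with hneg | hpos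
    · have e1 : ts < t4 := by nlinarith
      have e2 : t5 ≤ ts := by nlinarith
      exact ⟨le_trans h5.1 e2, le_trans (le_of_lt e1) h4.2⟩
    · have e1 : t4 < ts := by nlinarith
      have e2 : ts ≤ t5 := by nlinarith
      exact ⟨le_trans h4.1 (le_of_lt e1), le_trans e2 h5.2⟩
  have hGs0 : G0 + ts * dG = 0 := by
    have hup : ∀ n : ℕ,
        (G0 + ts * dG) * 2 ^ n ≤ -2 * (U0 + t4 * dU) - dG * (t4 - ts) := by
      intro n
      have h2n : (0:ℝ) < 2 ^ n := by positivity
      set tn : ℝ := ts + (t4 - ts) / 2 ^ n with htn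
      have htn_mem : tn ∈ Icc (0:ℝ) 1 := by
        rcases le_or_gt ts t4 with hc | hc
        · constructor
          · have : 0 ≤ (t4 - ts) / 2 ^ n := div_nonneg (by linarith) (by positivity)
            rw [htn]; linarith [hts_mem.1]
          · have h2n1 : (1:ℝ) ≤ 2 ^ n := one_le_pow₀ (by norm_num)
            have : (t4 - ts) / 2 ^ n ≤ t4 - ts := by
              rw [div_le_iff₀ h2n]; nlinarith
            rw [htn]; linarith [h4.2, hts_mem.2]
        · constructor
          · have h2n1 : (1:ℝ) ≤ 2 ^ n := one_le_pow₀ (by norm_num)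
            have h1 : t4 - ts ≤ (t4 - ts) / 2 ^ n := by
              rw [le_div_iff₀ h2n]; nlinarith
            rw [htn]; linarith [h4.1, hts_mem.1]
          · have : (t4 - ts) / 2 ^ n ≤ 0 := by
              apply div_nonpos_of_nonpos_of_nonneg <;> [linarith; positivity]
            rw [htn]; linarith [hts_mem.2]
      have e2 : U0 + tn * dU = (U0 + t4 * dU) / 2 ^ n := by
        rw [← key tn, ← key t4]
        have e0 : tn - ts = (t4 - ts) / 2 ^ n := by rw [htn]; ring
        rw [e0]
        ring
      have hUtn : U0 + tn * dU < 0 := by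
        rw [e2]; exact div_neg_of_neg_of_pos hU4 h2n
      have hineq := hUG tn htn_mem hUtn
      have e1 : G0 + tn * dG = (G0 + ts * dG) + dG * (t4 - ts) / 2 ^ n := by
        rw [htn]; ring
      rw [e1, e2] at hineq
      have hineq' := mul_le_mul_of_nonneg_right hineq (le_of_lt h2n)
      have e3 : ((G0 + ts * dG) + dG * (t4 - ts) / 2 ^ n) * 2 ^ n
          = (G0 + ts * dG) * 2 ^ n + dG * (t4 - ts) := by
        field_simp
      have e4 : (-2 * ((U0 + t4 * dU) / 2 ^ n)) * 2 ^ n = -2 * (U0 + t4 * dU) := by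
        field_simp
      rw [e3, e4] at hineq'
      linarith
    have hGs_nonneg : 0 ≤ G0 + ts * dG := hG ts hts_mem
    rcases eq_or_lt_of_le hGs_nonneg with h | hGs_pos
    · exact h.symm
    exfalso
    set c : ℝ := -2 * (U0 + t4 * dU) - dG * (t4 - ts) with hc
    obtain ⟨n, hn⟩ := pow_unbounded_of_one_lt (c / (G0 + ts * dG)) (one_lt_two (α := ℝ))
    rw [div_lt_iff₀ hGs_pos] at hn
    have := hup n
    nlinarith
  rcases eq_or_lt_of_le hU5 with hU5eq | hU5pos
  · have ht5s : t5 = ts := by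
      have h0 : (t5 - ts) * dU = 0 := by rw [key]; exact hU5eq.symm
      rcases mul_eq_zero.1 h0 with h | h
      · linarith
      · exact absurd h hdU
    exact absurd ⟨hU5eq.symm, by rw [ht5s]; exact hGs0⟩ hne5
  · have h5s : 0 < (t5 - ts) * dU := by rw [key]; exact hU5pos
    have hprodd : ((t4 - ts) * dU) * ((t5 - ts) * dU) < 0 := mul_neg_of_neg_of_pos hU4' h5s
    have hprod : (t4 - ts) * (t5 - ts) < 0 := by
      have e : ((t4 - ts) * dU) * ((t5 - ts) * dU) = ((t4 - ts) * (t5 - ts)) * dU ^ 2 := by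
        ring
      rw [e] at hprodd
      nlinarith [sq_nonneg dU]
    have hG4' : 0 ≤ dG * (t4 - ts) := by
      have := hG t4 h4
      nlinarith [hGs0]
    have hG5' : 0 ≤ dG * (t5 - ts) := by
      have := hG t5 h5
      nlinarith [hGs0]
    have hmul : 0 ≤ dG ^ 2 * ((t4 - ts) * (t5 - ts)) := by
      have e : (dG * (t4 - ts)) * (dG * (t5 - ts)) = dG ^ 2 * ((t4 - ts) * (t5 - ts)) := by ring
      rw [← e]
      exact mul_nonneg hG4' hG5'
    have hdG2 : dG ^ 2 ≤ 0 := by nlinarith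
    have hdG : dG = 0 := by nlinarith [sq_nonneg dG]
    refine ⟨hdG, ?_⟩
    rw [hdG] at hGs0
    linarith
lemma fim (p q : ℂ) (t : ℝ) : (p + t • (q - p)).im = p.im + t * (q.im - p.im) := by simp
lemma fre (p q : ℂ) (t : ℝ) : (p + t • (q - p)).re = p.re + t * (q.re - p.re) := by simp

section
variable {K : Set ℂ}

/-- The main doubling lemma: a non-horizontal segment in K yields another with
    at least double the vertical extent. -/
lemma main_double (hK : IsAttractor mainS K) {p q : ℂ} (him : p.im ≠ q.im)
    (hsub : segment ℝ p q ⊆ K) :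
    ∃ p' q' : ℂ, segment ℝ p' q' ⊆ K ∧ 2 * |q.im - p.im| ≤ |q'.im - p'.im| := by
  have hd0 : 0 < |q.im - p.im| := abs_pos.2 (sub_ne_zero.2 (Ne.symm him))
  have hpre : IsPreconnected (segment ℝ p q) := (convex_segment p q).isPreconnected
  have split : ∀ s t : Set ℂ, IsClosed s → IsClosed t →
      (∀ z ∈ segment ℝ p q, z ∈ s ∨ z ∈ t) →
      (∀ z ∈ segment ℝ p q, z ∈ s → z ∈ t → False) →
      (∀ z ∈ segment ℝ p q, z ∈ s) ∨ (∀ z ∈ segment ℝ p q, z ∈ t) := by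
    intro s t hcs hct hcov hdisj
    by_cases hs : ∃ z ∈ segment ℝ p q, z ∈ s
    · by_cases ht : ∃ z ∈ segment ℝ p q, z ∈ t
      · exfalso
        obtain ⟨z1, hz1, hz1s⟩ := hs
        obtain ⟨z2, hz2, hz2t⟩ := ht
        obtain ⟨w, hwseg, hws, hwt⟩ := isPreconnected_closed_iff.mp hpre s t hcs hct
          (fun z hz => (hcov z hz).elim Or.inl Or.inr)
          ⟨z1, hz1, hz1s⟩ ⟨z2, hz2, hz2t⟩
        exact hdisj w hwseg hws hwt
      · push_neg at ht
        left; intro z hz; exact (hcov z hz).resolve_right (ht z hz)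
    · push_neg at hs
      right; intro z hz; exact (hcov z hz).resolve_left (hs z hz)
  have hcovP : ∀ z ∈ segment ℝ p q, PA z ∨ (PB z ∨ PC4 z ∨ PC5 z) := by
    intro z hz
    rcases cover hK (hsub hz) with ⟨_, h⟩ | ⟨_, h⟩ | ⟨_, h⟩ | ⟨_, h⟩
    · exact Or.inl h
    · exact Or.inr (Or.inl h)
    · exact Or.inr (Or.inr (Or.inl h))
    · exact Or.inr (Or.inr (Or.inr h))
  have hSRcl : IsClosed {z : ℂ | PB z ∨ PC4 z ∨ PC5 z} := by
    have : {z : ℂ | PB z ∨ PC4 z ∨ PC5 z}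
        = {z : ℂ | PB z} ∪ ({z : ℂ | PC4 z} ∪ {z : ℂ | PC5 z}) := by
      ext w; simp [Set.mem_union, Set.mem_setOf_eq]
    rw [this]
    exact closed_PB.union (closed_PC4.union closed_PC5)
  rcases split {z : ℂ | PA z} {z : ℂ | PB z ∨ PC4 z ∨ PC5 z} closed_PA hSRcl
    (fun z hz => hcovP z hz)
    (fun z _ hA hR => by
      rcases hR with h | h | h
      exacts [PA_PB z hA h, PA_PC4 z hA h, PA_PC5 z hA h]) with hA | hR
  · -- case A : scale by S1⁻¹
    have hmem : ∀ z ∈ segment ℝ p q, 4 * (z - 0) ∈ K := by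
      intro z hz
      rcases cover hK (hsub hz) with ⟨⟨y, hy, hzy⟩, _⟩ | ⟨_, h⟩ | ⟨_, h⟩ | ⟨_, h⟩
      · have : 4 * (z - 0) = y := by rw [hzy]; ring
        rwa [this]
      · exact (PA_PB z (hA z hz) h).elim
      · exact (PA_PC4 z (hA z hz) h).elim
      · exact (PA_PC5 z (hA z hz) h).elim
    refine ⟨4 * (p - 0), 4 * (q - 0), pull4 0 hmem, ?_⟩
    have e : (4 * (q - 0)).im - (4 * (p - 0)).im = 4 * (q.im - p.im) := by
      rw [mul4_im, mul4_im]; simp; ring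
    rw [e, abs_mul]
    rw [abs_of_pos (by norm_num : (0:ℝ) < 4)]
    linarith
  rcases split {z : ℂ | PB z} {z : ℂ | PC4 z ∨ PC5 z} closed_PB
    (by
      have : {z : ℂ | PC4 z ∨ PC5 z} = {z : ℂ | PC4 z} ∪ {z : ℂ | PC5 z} := by
        ext w; simp [Set.mem_union, Set.mem_setOf_eq]
      rw [this]; exact closed_PC4.union closed_PC5)
    (fun z hz => hR z hz)
    (fun z _ hB hC => by
      rcases hC with h | h
      exacts [PB_PC4 z hB h, PB_PC5 z hB h]) with hB | hC
  · -- case B : scale by S2⁻¹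
    have hmem : ∀ z ∈ segment ℝ p q, 2 * (z - 2) ∈ K := by
      intro z hz
      rcases cover hK (hsub hz) with ⟨_, h⟩ | ⟨⟨y, hy, hzy⟩, _⟩ | ⟨_, h⟩ | ⟨_, h⟩
      · exact (PA_PB z h (hB z hz)).elim
      · have : 2 * (z - 2) = y := by rw [hzy]; ring
        rwa [this]
      · exact (PB_PC4 z (hB z hz) h).elim
      · exact (PB_PC5 z (hB z hz) h).elim
    refine ⟨2 * (p - 2), 2 * (q - 2), pull2 hmem, ?_⟩
    have e : (2 * (q - 2)).im - (2 * (p - 2)).im = 2 * (q.im - p.im) := by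
      rw [mul2_im, mul2_im]; ring
    rw [e, abs_mul]
    rw [abs_of_pos (by norm_num : (0:ℝ) < 2)]
  -- case C
  by_cases h4all : ∀ z ∈ segment ℝ p q, PC4 z
  · -- all of the segment in piece 4 : scale by S4⁻¹
    have hmem : ∀ z ∈ segment ℝ p q, 4 * (z - (1 + Real.sqrt 3 * Complex.I)) ∈ K := by
      intro z hz
      rcases cover hK (hsub hz) with ⟨_, h⟩ | ⟨_, h⟩ | ⟨⟨y, hy, hzy⟩, _⟩ | ⟨_, h⟩
      · exact (PA_PC4 z h (h4all z hz)).elim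
      · exact (PB_PC4 z h (h4all z hz)).elim
      · have : 4 * (z - (1 + Real.sqrt 3 * Complex.I)) = y := by rw [hzy]; ring
        rwa [this]
      · -- z is the junction point
        have hzj : z = jpt := PC4_PC5 z (h4all z hz) h
        have e : 4 * (z - (1 + Real.sqrt 3 * Complex.I))
            = 2 + 2 * Real.sqrt 3 * Complex.I := by
          rw [hzj, jpt]; ring
        rw [e]; exact topv_mem hK
    refine ⟨4 * (p - (1 + Real.sqrt 3 * Complex.I)),
      4 * (q - (1 + Real.sqrt 3 * Complex.I)), pull4 _ hmem, ?_⟩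
    have e : (4 * (q - (1 + Real.sqrt 3 * Complex.I))).im
        - (4 * (p - (1 + Real.sqrt 3 * Complex.I))).im = 4 * (q.im - p.im) := by
      rw [mul4_im, mul4_im]; ring
    rw [e, abs_mul, abs_of_pos (by norm_num : (0:ℝ) < 4)]
    linarith
  by_cases h5all : ∀ z ∈ segment ℝ p q, PC5 z
  · -- all of the segment in piece 5 : scale by S5⁻¹
    have hmem : ∀ z ∈ segment ℝ p q,
        4 * (z - (3 / 2 + (3 * Real.sqrt 3 / 2) * Complex.I)) ∈ K := by
      intro z hz
      rcases cover hK (hsub hz) with ⟨_, h⟩ | ⟨_, h⟩ | ⟨_, h⟩ | ⟨⟨y, hy, hzy⟩, _⟩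
      · exact (PA_PC5 z h (h5all z hz)).elim
      · exact (PB_PC5 z h (h5all z hz)).elim
      · have hzj : z = jpt := PC4_PC5 z h (h5all z hz)
        have e : 4 * (z - (3 / 2 + (3 * Real.sqrt 3 / 2) * Complex.I)) = 0 := by
          rw [hzj, jpt]; ring
        rw [e]; exact zero_mem hK
      · have : 4 * (z - (3 / 2 + (3 * Real.sqrt 3 / 2) * Complex.I)) = y := by rw [hzy]; ring
        rwa [this]
    refine ⟨4 * (p - (3 / 2 + (3 * Real.sqrt 3 / 2) * Complex.I)),
      4 * (q - (3 / 2 + (3 * Real.sqrt 3 / 2) * Complex.I)), pull4 _ hmem, ?_⟩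
    have e : (4 * (q - (3 / 2 + (3 * Real.sqrt 3 / 2) * Complex.I))).im
        - (4 * (p - (3 / 2 + (3 * Real.sqrt 3 / 2) * Complex.I))).im
        = 4 * (q.im - p.im) := by
      rw [mul4_im, mul4_im]; ring
    rw [e, abs_mul, abs_of_pos (by norm_num : (0:ℝ) < 4)]
    linarith
  -- mixed case : the segment must lie on the line y = √3 x, impossible
  exfalso
  push_neg at h4all h5all
  obtain ⟨z4, hz4seg, hz4n5⟩ := h5all
  obtain ⟨z5, hz5seg, hz5n4⟩ := h4all
  have hz4C : PC4 z4 := (hC z4 hz4seg).resolve_right hz4n5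
  have hz5C : PC5 z5 := (hC z5 hz5seg).resolve_left hz5n4
  have ht4' := hz4seg; rw [segment_eq_image' ℝ p q] at ht4'
  obtain ⟨t4, ht4, hft4'⟩ := ht4'
  have hft4 : p + t4 • (q - p) = z4 := hft4'
  have ht5' := hz5seg; rw [segment_eq_image' ℝ p q] at ht5'
  obtain ⟨t5, ht5, hft5'⟩ := ht5'
  have hft5 : p + t5 • (q - p) = z5 := hft5'
  have hfmem : ∀ t ∈ Icc (0:ℝ) 1, p + t • (q - p) ∈ segment ℝ p q := by
    intro t ht
    rw [segment_eq_image' ℝ p q]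
    exact ⟨t, ht, rfl⟩
  set U0 : ℝ := p.im - 3 * Real.sqrt 3 / 2 with hU0
  set dU : ℝ := q.im - p.im with hdU
  set G0 : ℝ := Real.sqrt 3 * p.re - p.im with hG0
  set dG : ℝ := Real.sqrt 3 * (q.re - p.re) - (q.im - p.im) with hdG
  have eqU : ∀ t : ℝ, U0 + t * dU = (p + t • (q - p)).im - 3 * Real.sqrt 3 / 2 := by
    intro t; rw [fim, hU0, hdU]; ring
  have eqG : ∀ t : ℝ, G0 + t * dG
      = Real.sqrt 3 * (p + t • (q - p)).re - (p + t • (q - p)).im := by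
    intro t; rw [fim, fre, hG0, hdG]; ring
  have hGh : ∀ t ∈ Icc (0:ℝ) 1, 0 ≤ G0 + t * dG := by
    intro t ht
    rcases hC _ (hfmem t ht) with h | h
    · rw [eqG]; nlinarith [h.2.1]
    · rw [eqG]; nlinarith [h.2.1]
  have hUGh : ∀ t ∈ Icc (0:ℝ) 1, U0 + t * dU < 0 → G0 + t * dG ≤ -2 * (U0 + t * dU) := by
    intro t ht hUneg
    rcases hC _ (hfmem t ht) with h | h
    · rw [eqG, eqU]; nlinarith [h.2.2]
    · exfalso
      rw [eqU] at hUneg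
      nlinarith [h.1]
  have hU4h : U0 + t4 * dU < 0 := by
    rw [eqU, hft4]
    by_contra hcon
    push_neg at hcon
    exact hz4n5 ⟨by linarith, hz4C.2.1, by nlinarith [hz4C.2.2, sq3_pos]⟩
  have hU5h : 0 ≤ U0 + t5 * dU := by
    rw [eqU, hft5]
    linarith [hz5C.1]
  have hne5 : ¬(U0 + t5 * dU = 0 ∧ G0 + t5 * dG = 0) := by
    rintro ⟨e1, e2⟩
    rw [eqU, hft5] at e1
    rw [eqG, hft5] at e2
    have hre : z5.re = 3 / 2 := by
      have h1 : Real.sqrt 3 * (z5.re - 3 / 2) = 0 := by nlinarith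
      rcases mul_eq_zero.1 h1 with h | h
      · exact absurd h (ne_of_gt sq3_pos)
      · linarith
    have hzj : z5 = jpt :=
      Complex.ext (by rw [hre, jpt_re]) (by rw [jpt_im]; linarith)
    rw [hzj] at hz5n4
    exact hz5n4 PC4_jpt
  obtain ⟨hdG0, hG00⟩ := affine_cone ht4 ht5 hGh hUGh hU4h hU5h hne5
  have hp_line : p.im = Real.sqrt 3 * p.re := by rw [hG0] at hG00; linarith
  have hq_line : q.im = Real.sqrt 3 * q.re := by
    rw [hdG] at hdG0
    nlinarith [hG00, hG0]
  rcases lt_trichotomy p.re q.re with h | h | h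
  · exact line_no_seg hK hp_line hq_line h hsub
  · exact him (by rw [hp_line, hq_line, h])
  · refine line_no_seg hK hq_line hp_line h ?_
    rw [segment_symm]
    exact hsub

end

/-- Every nondegenerate line segment contained in `K` is parallel to the
`x`-axis. -/
theorem stmt11 (K : Set ℂ) (hK : IsAttractor mainS K) :
    ∀ p q : ℂ, p ≠ q → segment ℝ p q ⊆ K → p.im = q.im := by
  intro p q hne hsub
  by_contra him
  set d : ℝ := |q.im - p.im| with hd
  have hd0 : 0 < d := abs_pos.2 (sub_ne_zero.2 (Ne.symm him))
  have grow : ∀ n : ℕ, ∃ p' q' : ℂ, segment ℝ p' q' ⊆ K ∧ 2 ^ n * d ≤ |q'.im - p'.im| := by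
    intro n
    induction n with
    | zero => exact ⟨p, q, hsub, by norm_num [hd]⟩
    | succ m ih =>
      obtain ⟨a, b, h1, h2⟩ := ih
      have hpow : (0:ℝ) < 2 ^ m * d := by positivity
      have hab : a.im ≠ b.im := by
        intro h
        rw [h] at h2
        simp at h2
        nlinarith
      obtain ⟨a', b', g1, g2⟩ := main_double hK hab h1
      exact ⟨a', b', g1, by rw [pow_succ]; nlinarith⟩
  obtain ⟨n, hn⟩ := pow_unbounded_of_one_lt (4 / d) (one_lt_two (α := ℝ))
  obtain ⟨a, b, h1, h2⟩ := grow n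
  have haK : a ∈ K := h1 (left_mem_segment ℝ a b)
  have hbK : b ∈ K := h1 (right_mem_segment ℝ a b)
  obtain ⟨ha1, ha2, ha3⟩ := K_sub_W hK haK
  obtain ⟨hb1, hb2, hb3⟩ := K_sub_W hK hbK
  have habs : |b.im - a.im| ≤ 4 := by
    rw [abs_le]
    constructor <;> nlinarith [sq3_pos, sq3_sq]
  rw [div_lt_iff₀ hd0] at hn
  linarith
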